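/- Fix σ > 0, T > 0, R > 0 and a positive integer N̄. Let 0 < t₁ < … < t_l ≤ T with l ≤ N̄. Let G be the l×l matrix with entries G_{jk} = σ²·min(t_j, t_k), and let v ∈ ℝ^l be the vector with entries v_j = σ²·(t_l·t_j − t_j²/2). Then G + R·I_l is invertible and the vector κ̃ := (G + R·I_l)⁻¹ v satisfies Σ_{j=1}^{l} |κ̃_j| ≤ N̄·σ²·T² / (2R). -/

import Mathlib

open Matrix


/-- Core of Lemma D.1 (bound on the kernel prefactor of the Gaussian ODE filter):
for `0 < t₁ < … < t_l ≤ T` with `l ≤ N̄`, the Gram matrix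
`G_{jk} = σ²·min(t_j,t_k)` regularized by `R·I` is invertible and the row
`κ̃ = (G + R·I)⁻¹ v` with `v_j = σ²(t_l·t_j − t_j²/2)` satisfies
`∑_j |κ̃_j| ≤ N̄·σ²·T²/(2R)`. -/
theorem kernel_prefactor_row_l1_bound
    (σ T R : ℝ) (hσ : 0 < σ) (hT : 0 < T) (hR : 0 < R)
    (Nbar l : ℕ) (hNbar : 0 < Nbar) (hl : 0 < l) (hlN : l ≤ Nbar)
    (t : Fin l → ℝ) (hmono : StrictMono t) (hpos : ∀ j, 0 < t j)
    (hle : t ⟨l - 1, Nat.sub_lt hl Nat.one_pos⟩ ≤ T)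
    (G : Matrix (Fin l) (Fin l) ℝ)
    (hG : G = Matrix.of fun j k => σ ^ 2 * min (t j) (t k))
    (v : Fin l → ℝ)
    (hv : ∀ j, v j =
      σ ^ 2 * (t ⟨l - 1, Nat.sub_lt hl Nat.one_pos⟩ * t j - (t j) ^ 2 / 2)) :
    IsUnit (G + R • (1 : Matrix (Fin l) (Fin l) ℝ)) ∧
      ∑ j, |((G + R • (1 : Matrix (Fin l) (Fin l) ℝ))⁻¹).mulVec v j| ≤
        (Nbar : ℝ) * σ ^ 2 * T ^ 2 / (2 * R) := by
  -- increments of the time grid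
  set d : Fin l → ℝ := fun m =>
    if h : (m : ℕ) = 0 then t m
    else t m - t ⟨(m : ℕ) - 1, Nat.lt_of_le_of_lt (Nat.sub_le _ _) m.isLt⟩ with hd_def
  have hd : ∀ m, 0 ≤ d m := by
    intro m
    by_cases h : (m : ℕ) = 0
    · simp only [hd_def, h, dif_pos]
      exact (hpos m).le
    · simp only [hd_def, h, dif_neg, not_false_iff, sub_nonneg]
      exact hmono.monotone (by simp [Fin.le_def, Nat.sub_le])
  -- telescoping sum
  have C : ∀ n, ∀ h : n < l,
      (∑ m : Fin l, (if (m : ℕ) ≤ n then d m else 0)) = t ⟨n, h⟩ := by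
    intro n
    induction n with
    | zero =>
      intro h
      have e1 : ∀ m : Fin l, (if (m : ℕ) ≤ 0 then d m else 0)
          = if m = ⟨0, h⟩ then d m else 0 := by
        intro m
        apply if_congr _ rfl rfl
        simp [Fin.ext_iff, Nat.le_zero]
      rw [Finset.sum_congr rfl fun m _ => e1 m, Finset.sum_ite_eq' Finset.univ ⟨0, h⟩ d]
      simp [hd_def]
    | succ n ih =>
      intro h
      have hn : n < l := Nat.lt_of_succ_lt h
      have e1 : ∀ m : Fin l, (if (m : ℕ) ≤ n + 1 then d m else 0)
          = (if (m : ℕ) ≤ n then d m else 0) + (if m = ⟨n + 1, h⟩ then d m else 0) := by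
        intro m
        by_cases h1 : (m : ℕ) ≤ n
        · rw [if_pos (Nat.le_succ_of_le h1), if_pos h1,
            if_neg (by simp [Fin.ext_iff]; omega), add_zero]
        · by_cases h2 : (m : ℕ) = n + 1
          · rw [if_pos (by omega), if_neg h1, if_pos (Fin.ext h2), zero_add]
          · rw [if_neg (by omega), if_neg h1, if_neg (by simp [Fin.ext_iff]; omega), add_zero]
      rw [Finset.sum_congr rfl fun m _ => e1 m, Finset.sum_add_distrib, ih hn,
        Finset.sum_ite_eq' Finset.univ (⟨n + 1, h⟩ : Fin l) d]
      have : d ⟨n + 1, h⟩ = t ⟨n + 1, h⟩ - t ⟨n, hn⟩ := by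
        simp [hd_def]
      simp only [Finset.mem_univ, if_pos, this]
      ring
  have C' : ∀ i : Fin l, (∑ m : Fin l, (if m ≤ i then d m else 0)) = t i := by
    intro i
    calc (∑ m : Fin l, if m ≤ i then d m else 0)
        = ∑ m : Fin l, (if (m : ℕ) ≤ (i : ℕ) then d m else 0) :=
          Finset.sum_congr rfl fun m _ => if_congr Fin.le_def rfl rfl
      _ = t ⟨i.val, i.isLt⟩ := C i.val i.isLt
      _ = t i := by rw [Fin.eta]
  -- indicator functions
  set e : Fin l → Fin l → ℝ := fun m j => if m ≤ j then 1 else 0 with he_def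
  have A : ∀ j k : Fin l, min (t j) (t k) = ∑ m, d m * e m j * e m k := by
    intro j k
    have h1 : min (t j) (t k) = t (min j k) := (hmono.monotone.map_min).symm
    rw [h1, ← C' (min j k)]
    refine Finset.sum_congr rfl fun m _ => ?_
    by_cases hj : m ≤ j <;> by_cases hk : m ≤ k <;>
      simp [he_def, hj, hk, le_min_iff]
  -- the quadratic form of G is nonnegative
  have key : ∀ x : Fin l → ℝ,
      x ⬝ᵥ (G *ᵥ x) = σ ^ 2 * ∑ m, d m * (∑ j, e m j * x j) ^ 2 := by
    intro x
    have step1 : x ⬝ᵥ (G *ᵥ x)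
        = ∑ j, ∑ k, ∑ m, σ ^ 2 * d m * (e m j * x j) * (e m k * x k) := by
      simp only [dotProduct, Matrix.mulVec, hG, Matrix.of_apply]
      refine Finset.sum_congr rfl fun j _ => ?_
      rw [Finset.mul_sum]
      refine Finset.sum_congr rfl fun k _ => ?_
      rw [A j k]
      simp only [Finset.mul_sum, Finset.sum_mul]
      exact Finset.sum_congr rfl fun m _ => by ring
    have step2 : (∑ j, ∑ k, ∑ m, σ ^ 2 * d m * (e m j * x j) * (e m k * x k))
        = ∑ m, ∑ j, ∑ k, σ ^ 2 * d m * (e m j * x j) * (e m k * x k) := by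
      rw [Finset.sum_congr rfl fun j _ => Finset.sum_comm]
      exact Finset.sum_comm
    have step3 : ∀ m, (∑ j, ∑ k, σ ^ 2 * d m * (e m j * x j) * (e m k * x k))
        = σ ^ 2 * (d m * (∑ j, e m j * x j) ^ 2) := by
      intro m
      conv_rhs => rw [pow_two (∑ j, e m j * x j), Finset.sum_mul_sum]
      simp only [Finset.mul_sum]
      refine Finset.sum_congr rfl fun j _ => ?_
      refine Finset.sum_congr rfl fun k _ => ?_
      ring
    rw [step1, step2, Finset.sum_congr rfl fun m _ => step3 m, ← Finset.mul_sum]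
  have hGpsd : ∀ x : Fin l → ℝ, 0 ≤ x ⬝ᵥ (G *ᵥ x) := by
    intro x
    rw [key x]
    have : 0 ≤ ∑ m, d m * (∑ j, e m j * x j) ^ 2 :=
      Finset.sum_nonneg fun m _ => mul_nonneg (hd m) (sq_nonneg _)
    positivity
  set M := G + R • (1 : Matrix (Fin l) (Fin l) ℝ) with hM
  have hMmul : ∀ x : Fin l → ℝ, M *ᵥ x = G *ᵥ x + R • x := by
    intro x
    rw [hM, Matrix.add_mulVec, Matrix.smul_mulVec, Matrix.one_mulVec]
  have hMdot : ∀ x : Fin l → ℝ, x ⬝ᵥ (M *ᵥ x) = x ⬝ᵥ (G *ᵥ x) + R * (x ⬝ᵥ x) := by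
    intro x
    rw [hMmul x, dotProduct_add, dotProduct_smul, smul_eq_mul]
  have hMpd : M.PosDef := by
    rw [Matrix.posDef_iff_dotProduct_mulVec]
    constructor
    · show Mᴴ = M
      ext i j
      simp [hM, hG, Matrix.conjTranspose_apply, Matrix.add_apply, Matrix.smul_apply,
        Matrix.one_apply, min_comm, eq_comm]
    · intro x hx
      simp only [star_trivial]
      rw [hMdot x]
      have h1 : 0 < x ⬝ᵥ x := by
        obtain ⟨i, hi⟩ := Function.ne_iff.mp hx
        have : (0:ℝ) < x i * x i := by
          have := hi
          simp only [Pi.zero_apply] at this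
          nlinarith [sq_abs (x i), abs_pos.mpr this, sq_nonneg (x i)]
        calc (0:ℝ) < x i * x i := this
          _ ≤ ∑ j, x j * x j :=
            Finset.single_le_sum (fun j _ => mul_self_nonneg (x j)) (Finset.mem_univ i)
          _ = x ⬝ᵥ x := rfl
      have h2 := hGpsd x
      nlinarith
  have hUnit : IsUnit M := hMpd.isUnit
  refine ⟨hUnit, ?_⟩
  set κ : Fin l → ℝ := M⁻¹ *ᵥ v with hκ
  have hMκ : M *ᵥ κ = v := by
    rw [hκ, Matrix.mulVec_mulVec, Matrix.mul_nonsing_inv _ ((Matrix.isUnit_iff_isUnit_det _).mp hUnit),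
      Matrix.one_mulVec]
  -- bound on v
  have hvb : ∀ j, 0 ≤ v j ∧ v j ≤ σ ^ 2 * T ^ 2 / 2 := by
    intro j
    have hjle : t j ≤ t ⟨l - 1, Nat.sub_lt hl Nat.one_pos⟩ := by
      apply hmono.monotone
      simp only [Fin.le_def]
      omega
    have h1 := hpos j
    have h2 := hle
    have hσ2 : 0 ≤ σ ^ 2 := sq_nonneg σ
    have e1 : t j * t j ≤ t ⟨l - 1, Nat.sub_lt hl Nat.one_pos⟩ * t j :=
      mul_le_mul_of_nonneg_right hjle h1.le
    have e2 : t ⟨l - 1, Nat.sub_lt hl Nat.one_pos⟩ * t j - t j ^ 2 / 2 ≤ T ^ 2 / 2 := by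
      nlinarith [sq_nonneg (t ⟨l - 1, Nat.sub_lt hl Nat.one_pos⟩ - t j)]
    constructor
    · rw [hv j]; nlinarith
    · rw [hv j]; nlinarith [mul_le_mul_of_nonneg_left e2 hσ2]
  set S := ∑ j, |κ j| with hS
  have hS0 : 0 ≤ S := Finset.sum_nonneg fun j _ => abs_nonneg _
  -- lower and upper bounds for κ ⬝ᵥ v
  have hlow : R * (∑ j, κ j ^ 2) ≤ κ ⬝ᵥ v := by
    have h1 : κ ⬝ᵥ v = κ ⬝ᵥ (G *ᵥ κ) + R * (κ ⬝ᵥ κ) := by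
      rw [← hMκ, hMdot κ]
    have h2 : κ ⬝ᵥ κ = ∑ j, κ j ^ 2 := by
      simp [dotProduct, sq]
    rw [h1, h2]
    nlinarith [hGpsd κ]
  have hup : κ ⬝ᵥ v ≤ (σ ^ 2 * T ^ 2 / 2) * S := by
    have : ∀ j, κ j * v j ≤ |κ j| * (σ ^ 2 * T ^ 2 / 2) := by
      intro j
      obtain ⟨hv0, hvT⟩ := hvb j
      calc κ j * v j ≤ |κ j| * v j := by
            apply mul_le_mul_of_nonneg_right (le_abs_self _) hv0
        _ ≤ |κ j| * (σ ^ 2 * T ^ 2 / 2) := by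
            apply mul_le_mul_of_nonneg_left hvT (abs_nonneg _)
    calc κ ⬝ᵥ v = ∑ j, κ j * v j := rfl
      _ ≤ ∑ j, |κ j| * (σ ^ 2 * T ^ 2 / 2) := Finset.sum_le_sum fun j _ => this j
      _ = (σ ^ 2 * T ^ 2 / 2) * S := by rw [hS, ← Finset.sum_mul]; ring
  -- Cauchy–Schwarz
  have hCS : S ^ 2 ≤ (l : ℝ) * ∑ j, κ j ^ 2 := by
    have := Finset.sum_mul_sq_le_sq_mul_sq Finset.univ (fun _ : Fin l => (1:ℝ))
      (fun j => |κ j|)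
    simpa [hS, sq_abs, Finset.card_univ] using this
  -- conclude
  have hmain : R * S ^ 2 ≤ (l : ℝ) * ((σ ^ 2 * T ^ 2 / 2) * S) := by
    calc R * S ^ 2 ≤ R * ((l : ℝ) * ∑ j, κ j ^ 2) := by
          apply mul_le_mul_of_nonneg_left hCS hR.le
      _ = (l : ℝ) * (R * ∑ j, κ j ^ 2) := by ring
      _ ≤ (l : ℝ) * ((σ ^ 2 * T ^ 2 / 2) * S) := by
          apply mul_le_mul_of_nonneg_left (le_trans hlow hup) (Nat.cast_nonneg l)
  have hlN' : (l : ℝ) ≤ (Nbar : ℝ) := Nat.cast_le.mpr hlN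
  rcases eq_or_lt_of_le hS0 with hSz | hSp
  · rw [← hSz]
    positivity
  · have h1 : R * S ≤ (l : ℝ) * (σ ^ 2 * T ^ 2 / 2) := by
      have := hmain
      nlinarith
    rw [le_div_iff₀ (show (0:ℝ) < 2 * R by positivity)]
    nlinarith [mul_le_mul_of_nonneg_right hlN' (show (0:ℝ) ≤ σ ^ 2 * T ^ 2 / 2 by positivity)]
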